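/- Let p be a prime and r ≥ 1. The augmentation ideal Δ of F_p[(ℤ/p)^r] is nilpotent; specifically Δ^{r(p-1)+1} = 0. -/

import Mathlib

/-- The augmentation ideal of the group algebra `F_p[H]`. -/
noncomputable def augIdeal (p : ℕ) (H : Type*) [Group H] :
    Ideal (MonoidAlgebra (ZMod p) H) :=
  RingHom.ker ((MonoidAlgebra.lift (ZMod p) (ZMod p) H) 1)

theorem augIdeal_nilpotent (p : ℕ) (hp : p.Prime) (r : ℕ) (hr : 1 ≤ r) :
    (augIdeal p (Multiplicative (Fin r → ZMod p))) ^ (r * (p - 1) + 1) = ⊥ := by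
  haveI : Fact p.Prime := ⟨hp⟩
  set H := Multiplicative (Fin r → ZMod p)
  set R := MonoidAlgebra (ZMod p) H
  haveI : CharP R p := charP_of_injective_algebraMap' (ZMod p) (A := R) p
  set N := r * (p - 1) + 1 with hN
  -- generators
  set x : Fin r → R := fun i =>
    MonoidAlgebra.of (ZMod p) H (Multiplicative.ofAdd (Pi.single i 1)) - 1 with hx
  set I : Ideal R := Ideal.span (Set.range x) with hI
  -- each generator is p-nilpotent
  have hxp : ∀ i, x i ^ p = 0 := by
    intro i
    have h1 : (MonoidAlgebra.of (ZMod p) H (Multiplicative.ofAdd (Pi.single i 1))) ^ p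
        = 1 := by
      rw [← map_pow]
      have : (Multiplicative.ofAdd (Pi.single i (1 : ZMod p)) : H) ^ p = 1 := by
        rw [← ofAdd_nsmul]
        have : p • (Pi.single i (1 : ZMod p) : Fin r → ZMod p) = 0 := by
          ext j
          simp [Pi.single_apply]
        simp [this]
      rw [this]; rfl
    rw [hx]
    simp only
    rw [sub_pow_char, h1, one_pow, sub_self]
  -- I ^ N = ⊥
  have hIN : I ^ N = ⊥ := by
    rw [hI]
    rw [Ideal.span, Submodule.span_pow, ← Ideal.span]
    rw [Ideal.span_eq_bot]
    intro y hy
    rw [Set.mem_pow] at hy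
    obtain ⟨f, hf⟩ := hy
    choose ι hι using fun j => (f j).2
    have hyprod : y = ∏ j : Fin N, x (ι j) := by
      rw [← hf, List.prod_ofFn]
      exact Finset.prod_congr rfl fun j _ => (hι j).symm
    -- pigeonhole
    obtain ⟨i, -, hi⟩ := Finset.exists_lt_card_fiber_of_mul_lt_card_of_maps_to
      (s := (Finset.univ : Finset (Fin N))) (t := (Finset.univ : Finset (Fin r)))
      (f := ι) (n := p - 1) (fun a _ => Finset.mem_univ _)
      (by simp [hN, Nat.lt_succ_iff])
    rw [hyprod, ← Finset.prod_filter_mul_prod_filter_not Finset.univ (fun j => ι j = i)]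
    have h1 : ∏ j ∈ Finset.univ.filter (fun j => ι j = i), x (ι j)
        = x i ^ (Finset.univ.filter (fun j => ι j = i)).card := by
      rw [Finset.prod_congr rfl (fun j hj => by
        rw [(Finset.mem_filter.mp hj).2]), Finset.prod_const]
    rw [h1]
    have : x i ^ (Finset.univ.filter (fun j => ι j = i)).card = 0 := by
      have hp2 := hp.two_le
      have hle : p ≤ (Finset.univ.filter (fun j => ι j = i)).card := by omega
      rw [← Nat.add_sub_cancel' hle, pow_add, hxp i, zero_mul]
    rw [this, zero_mul]
  -- augIdeal ≤ I
  have key : ∀ g : H, MonoidAlgebra.of (ZMod p) H g - 1 ∈ I := by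
    intro g
    let T : Submonoid H :=
      { carrier := {g | MonoidAlgebra.of (ZMod p) H g - 1 ∈ I}
        one_mem' := by
          have : MonoidAlgebra.of (ZMod p) H 1 - 1 ∈ I := by
            rw [map_one, sub_self]; exact zero_mem I
          exact this
        mul_mem' := by
          intro a b ha hb
          have : MonoidAlgebra.of (ZMod p) H (a * b) - 1
              = MonoidAlgebra.of (ZMod p) H a * (MonoidAlgebra.of (ZMod p) H b - 1)
                + (MonoidAlgebra.of (ZMod p) H a - 1) := by
            rw [map_mul]; ring
          show MonoidAlgebra.of (ZMod p) H (a * b) - 1 ∈ I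
          rw [this]
          exact Ideal.add_mem _ (Ideal.mul_mem_left _ _ hb) ha }
    have hgen : ∀ i, (Multiplicative.ofAdd (Pi.single i (1 : ZMod p)) : H) ∈ T :=
      fun i => Ideal.subset_span ⟨i, rfl⟩
    have : g ∈ T := by
      have hg : g = ∏ i : Fin r,
          (Multiplicative.ofAdd (Pi.single i (1 : ZMod p)) : H) ^ (g.toAdd i).val := by
        apply Multiplicative.toAdd.injective
        rw [toAdd_prod]
        simp only [toAdd_pow, toAdd_ofAdd]
        rw [← Finset.univ_sum_single g.toAdd]
        apply Finset.sum_congr rfl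
        intro i _
        ext j
        simp [Pi.single_apply]
      rw [hg]
      exact Submonoid.prod_mem T fun i _ => Submonoid.pow_mem T (hgen i) _
    exact this
  have hsub : augIdeal p H ≤ I := by
    intro a ha
    have hε : ((MonoidAlgebra.lift (ZMod p) (ZMod p) H) 1) a = 0 := ha
    have hεsum : (a.coeff.sum fun _ c => c) = 0 := by
      rw [MonoidAlgebra.lift_apply] at hε
      simpa using hε
    have hrep : a = a.coeff.sum fun g c => c • (MonoidAlgebra.of (ZMod p) H g - 1) := by
      have h2 : (a.coeff.sum fun g c => c • (MonoidAlgebra.of (ZMod p) H g - 1))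
          = (a.coeff.sum fun g c => c • MonoidAlgebra.of (ZMod p) H g)
            - (a.coeff.sum fun _ c => c • (1 : R)) := by
        rw [← Finsupp.sum_sub]
        exact Finsupp.sum_congr fun g _ => smul_sub _ _ _
      have h3 : (a.coeff.sum fun g c => c • MonoidAlgebra.of (ZMod p) H g) = a := by
        conv_rhs => rw [← MonoidAlgebra.sum_coeff_single a]
        exact Finsupp.sum_congr fun g _ => by
          rw [MonoidAlgebra.of_apply, MonoidAlgebra.smul_single', mul_one]
      have h4 : (a.coeff.sum fun _ c => c • (1 : R)) = 0 := by
        rw [Finsupp.sum, ← Finset.sum_smul]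
        rw [show (∑ g ∈ a.coeff.support, a.coeff g) = 0 from hεsum]
        exact zero_smul _ _
      rw [h2, h3, h4, sub_zero]
    rw [hrep]
    exact Ideal.sum_mem _ fun g _ => Submodule.smul_of_tower_mem I _ (key g)
  have : (augIdeal p H) ^ N ≤ ⊥ := hIN ▸ Ideal.pow_right_mono hsub N
  exact le_bot_iff.mp this
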